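/- For every real z > 2√(2/3), the integral ∫_{−2√(2/3)}^{2√(2/3)} [(3/(4π))·√(8/3 − x²)] / (x − z) dx equals r(z) = (3/4)·(−z + √(z² − 8/3)). -/

import Mathlib

set_option maxHeartbeats 1000000


noncomputable section

/-- Stieltjes transform of the semicircle law on `[-2√(2/3), 2√(2/3)]`, for `z > 2√(2/3)`. -/
def rST (z : ℝ) : ℝ := (3 / 4) * (-z + Real.sqrt (z ^ 2 - 8 / 3))

/-- For real `z > 2√(2/3)`, the Stieltjes transform of the semicircle density
`(3/(4π)) √(8/3 − x²)` on `[-2√(2/3), 2√(2/3)]` equals `r(z) = (3/4)(−z + √(z² − 8/3))`. -/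
theorem semicircle_stieltjes_transform (z : ℝ) (hz : 2 * Real.sqrt (2 / 3) < z) :
    ∫ x in (-(2 * Real.sqrt (2 / 3)))..(2 * Real.sqrt (2 / 3)),
      ((3 / (4 * Real.pi)) * Real.sqrt (8 / 3 - x ^ 2)) / (x - z) = rST z := by
  set R : ℝ := 2 * Real.sqrt (2 / 3) with hRdef
  have hRpos : 0 < R := by
    rw [hRdef]; positivity
  have hR2 : R ^ 2 = 8 / 3 := by
    rw [hRdef, mul_pow, Real.sq_sqrt (by norm_num : (0:ℝ) ≤ 2/3)]; norm_num
  have hRz : R < z := hz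
  have hzpos : 0 < z := lt_trans hRpos hRz
  have hz2R2 : 0 < z ^ 2 - R ^ 2 := by nlinarith
  set t : ℝ := Real.sqrt (z ^ 2 - R ^ 2) with htdef
  have htpos : 0 < t := Real.sqrt_pos.mpr hz2R2
  have ht2 : t ^ 2 = z ^ 2 - R ^ 2 := Real.sq_sqrt hz2R2.le
  set c : ℝ := 3 / (4 * Real.pi) with hcdef
  set F : ℝ → ℝ := fun x =>
    c * (Real.sqrt (R ^ 2 - x ^ 2) - z * Real.arcsin (x / R)
      - t * Real.arcsin ((R ^ 2 - z * x) / (R * (z - x)))) with hFdef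
  -- derivative on the open interval
  have hderiv : ∀ x ∈ Set.Ioo (-R) R,
      HasDerivAt F ((3 / (4 * Real.pi)) * Real.sqrt (8 / 3 - x ^ 2) / (x - z)) x := by
    intro x hx
    obtain ⟨hx1, hx2⟩ := hx
    have hzx : 0 < z - x := by linarith
    have hs2 : 0 < R ^ 2 - x ^ 2 := by nlinarith
    set s : ℝ := Real.sqrt (R ^ 2 - x ^ 2) with hsdef
    have hspos : 0 < s := Real.sqrt_pos.mpr hs2
    have hs : s ^ 2 = R ^ 2 - x ^ 2 := Real.sq_sqrt hs2.le
    -- piece 1 : sqrt (R^2 - x^2)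
    have h1 : HasDerivAt (fun y : ℝ => Real.sqrt (R ^ 2 - y ^ 2)) (-x / s) x := by
      have hinner : HasDerivAt (fun y : ℝ => R ^ 2 - y ^ 2) (-(2 * x)) x := by
        simpa using (hasDerivAt_pow 2 x).const_sub (R ^ 2)
      have := (Real.hasDerivAt_sqrt (by positivity : R ^ 2 - x ^ 2 ≠ 0)).comp x hinner
      refine this.congr_deriv ?_
      symm
      rw [← hsdef]
      field_simp
    -- piece 2 : arcsin (x / R)
    have hxR1 : x / R < 1 := by rw [div_lt_one hRpos]; exact hx2
    have hxR2 : -1 < x / R := by rw [lt_div_iff₀ hRpos]; linarith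
    have hsqR : Real.sqrt (1 - (x / R) ^ 2) = s / R := by
      rw [show 1 - (x / R) ^ 2 = (R ^ 2 - x ^ 2) / R ^ 2 by field_simp,
        Real.sqrt_div hs2.le, Real.sqrt_sq hRpos.le, hsdef]
    have h2 : HasDerivAt (fun y : ℝ => Real.arcsin (y / R)) (1 / s) x := by
      have hdiv : HasDerivAt (fun y : ℝ => y / R) (1 / R) x := by
        simpa using (hasDerivAt_id x).div_const R
      have := (Real.hasDerivAt_arcsin (ne_of_gt hxR2) (ne_of_lt hxR1)).comp x hdiv
      refine this.congr_deriv ?_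
      symm
      rw [hsqR]
      field_simp
    -- piece 3 : arcsin (u x)
    set u : ℝ → ℝ := fun y => (R ^ 2 - z * y) / (R * (z - y)) with hudef
    have hu' : HasDerivAt u ((R ^ 2 - z ^ 2) / (R * (z - x) ^ 2)) x := by
      have hN : HasDerivAt (fun y : ℝ => R ^ 2 - z * y) (-z) x := by
        simpa using ((hasDerivAt_id x).const_mul z).const_sub (R ^ 2)
      have hD : HasDerivAt (fun y : ℝ => R * (z - y)) (-R) x := by
        have : HasDerivAt (fun y : ℝ => z - y) (-1) x := by
          simpa using (hasDerivAt_id x).const_sub z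
        simpa using this.const_mul R
      have hDne : R * (z - x) ≠ 0 := by positivity
      have := hN.div hD hDne
      refine this.congr_deriv ?_
      symm
      field_simp
      ring
    have huval : 1 - u x ^ 2 = (s * t / (R * (z - x))) ^ 2 := by
      rw [hudef]
      have hRne : R ≠ 0 := ne_of_gt hRpos
      have hzxne : z - x ≠ 0 := ne_of_gt hzx
      field_simp
      nlinarith [hs, ht2]
    have hvpos : 0 < s * t / (R * (z - x)) := by positivity
    have hu2 : u x ^ 2 < 1 := by nlinarith
    have habs := abs_lt.mp ((sq_lt_one_iff_abs_lt_one _).mp hu2)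
    have hu1 : u x < 1 := habs.2
    have hum1 : -1 < u x := habs.1
    have hsqu : Real.sqrt (1 - u x ^ 2) = s * t / (R * (z - x)) := by
      rw [huval, Real.sqrt_sq hvpos.le]
    have h3 : HasDerivAt (fun y : ℝ => Real.arcsin (u y))
        (-(t / ((z - x) * s))) x := by
      have := (Real.hasDerivAt_arcsin (ne_of_gt hum1) (ne_of_lt hu1)).comp x hu'
      refine this.congr_deriv ?_
      symm
      rw [hsqu]
      have hsne : s ≠ 0 := ne_of_gt hspos
      have htne : t ≠ 0 := ne_of_gt htpos
      have hRne : R ≠ 0 := ne_of_gt hRpos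
      have hzxne : z - x ≠ 0 := ne_of_gt hzx
      field_simp
      linear_combination (-1 : ℝ) * ht2
    -- combine
    have hF : HasDerivAt F (c * (-x / s - z * (1 / s) - t * (-(t / ((z - x) * s))))) x :=
      (((h1.sub (h2.const_mul z)).sub (h3.const_mul t)).const_mul c)
    convert hF using 1
    have h83 : Real.sqrt (8 / 3 - x ^ 2) = s := by rw [hsdef, hR2]
    rw [h83, mul_div_assoc]
    congr 1
    have hxz : x - z ≠ 0 := by intro h; nlinarith
    have hzxne : z - x ≠ 0 := ne_of_gt hzx
    have hsne : s ≠ 0 := ne_of_gt hspos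
    field_simp
    linear_combination (z - x) * hs + (z - x) * ht2
  -- continuity of F on the closed interval
  have hcont : ContinuousOn F (Set.Icc (-R) R) := by
    apply ContinuousOn.mul continuousOn_const
    apply ContinuousOn.sub
    apply ContinuousOn.sub
    · exact (Real.continuous_sqrt.comp (by continuity)).continuousOn
    · exact (continuous_const.mul (Real.continuous_arcsin.comp
        (continuous_id.div_const R))).continuousOn
    · apply ContinuousOn.mul continuousOn_const
      apply Real.continuous_arcsin.comp_continuousOn
      apply ContinuousOn.div (by fun_prop) (by fun_prop)
      intro x hx
      have : x ≤ R := hx.2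
      have : 0 < z - x := by linarith
      positivity
  -- integrability of the integrand
  have hint : IntervalIntegrable
      (fun x => (3 / (4 * Real.pi)) * Real.sqrt (8 / 3 - x ^ 2) / (x - z))
      MeasureTheory.volume (-R) R := by
    apply ContinuousOn.intervalIntegrable
    apply ContinuousOn.div (by fun_prop) (by fun_prop)
    intro x hx
    rw [Set.uIcc_of_le (by linarith)] at hx
    have : x ≤ R := hx.2
    intro h
    have : x = z := by linarith
    linarith
  have key := intervalIntegral.integral_eq_sub_of_hasDerivAt_of_le (by linarith)
    hcont hderiv hint
  have hintegrand : (fun x => ((3 / (4 * Real.pi)) * Real.sqrt (8 / 3 - x ^ 2)) / (x - z))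
      = fun x => (3 / (4 * Real.pi)) * Real.sqrt (8 / 3 - x ^ 2) / (x - z) := rfl
  rw [hintegrand, key]
  -- evaluate endpoints
  have hRne : R ≠ 0 := ne_of_gt hRpos
  have hzRne : z - R ≠ 0 := by intro h; nlinarith
  have hzRne' : z + R ≠ 0 := by positivity
  have e1 : Real.sqrt (R ^ 2 - R ^ 2) = 0 := by simp
  have e2 : Real.sqrt (R ^ 2 - (-R) ^ 2) = 0 := by simp
  have e3 : R / R = 1 := div_self hRne
  have e4 : (-R) / R = -1 := by rw [neg_div, e3]
  have e5 : (R ^ 2 - z * R) / (R * (z - R)) = -1 := by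
    rw [div_eq_iff (by positivity)]; ring
  have e6 : (R ^ 2 - z * (-R)) / (R * (z - (-R))) = 1 := by
    rw [div_eq_iff (mul_ne_zero hRne (by intro h; nlinarith))]; ring
  rw [hFdef]
  simp only [e1, e2, e3, e4, e5, e6, Real.arcsin_one, Real.arcsin_neg_one]
  rw [rST, hcdef]
  have hz83 : z ^ 2 - 8 / 3 = z ^ 2 - R ^ 2 := by rw [hR2]
  rw [hz83, ← htdef]
  have hpi := Real.pi_ne_zero
  field_simp
  ring
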